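/- Define ψ_a(z) = ((1/2)(2a² - 4a + 1)z² + (1-2a)z + 1)/(1 - a z)² for a > 0. If ψ_a(-4) ≥ 0, ψ_a'(-4) ≥ 0, and the coefficient condition 1/2 - a ≥ 0 holds (which is necessary for ψ_a^{(k)}(-4) ≥ 0 for all k ≥ 2), then a = 1/4. -/

import Mathlib

/-- In the class `Π̂_{2/2,2}`, with
`ψ_a(z) = ((1/2)(2a² - 4a + 1)z² + (1-2a)z + 1)/(1 - a z)²` and `a > 0`:
if `ψ_a(-4) ≥ 0`, `ψ_a'(-4) ≥ 0`, and `1/2 - a ≥ 0`, then `a = 1/4`. -/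
theorem unique_a_in_pihat_2_2_2 (a : ℝ) (ha : 0 < a) :
    let ψ : ℝ → ℝ := fun z =>
      ((1 / 2) * (2 * a ^ 2 - 4 * a + 1) * z ^ 2 + (1 - 2 * a) * z + 1) /
        (1 - a * z) ^ 2
    0 ≤ ψ (-4) → 0 ≤ deriv ψ (-4) → 0 ≤ 1 / 2 - a → a = 1 / 4 := by
  intro ψ h0 h1 h2
  have hpos : (0:ℝ) < 1 - a * (-4) := by nlinarith
  have hden : (1 - a * (-4 : ℝ)) ^ 2 ≠ 0 := by positivity
  have hnum : HasDerivAt (fun z : ℝ =>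
      (1 / 2) * (2 * a ^ 2 - 4 * a + 1) * z ^ 2 + (1 - 2 * a) * z + 1)
      ((1 / 2) * (2 * a ^ 2 - 4 * a + 1) * (2 * (-4)) + (1 - 2 * a)) (-4) := by
    have h := (((hasDerivAt_pow 2 (-4 : ℝ)).const_mul
        ((1 / 2) * (2 * a ^ 2 - 4 * a + 1))).add
        ((hasDerivAt_id (-4 : ℝ)).const_mul (1 - 2 * a))).add_const 1
    exact h.congr_deriv (by norm_num)
  have hd : HasDerivAt (fun z : ℝ => (1 - a * z) ^ 2)
      (2 * (1 - a * (-4)) * (-a)) (-4) := by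
    have h : HasDerivAt (fun z : ℝ => 1 - a * z) (-a) (-4) := by
      simpa using ((hasDerivAt_id (-4 : ℝ)).const_mul a).const_sub 1
    simpa using h.fun_pow 2
  have hψ : HasDerivAt ψ
      ((((1 / 2) * (2 * a ^ 2 - 4 * a + 1) * (2 * (-4)) + (1 - 2 * a)) *
          (1 - a * (-4)) ^ 2 -
        ((1 / 2) * (2 * a ^ 2 - 4 * a + 1) * (-4) ^ 2 + (1 - 2 * a) * (-4) + 1) *
          (2 * (1 - a * (-4)) * (-a))) / ((1 - a * (-4)) ^ 2) ^ 2) (-4) :=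
    hnum.div hd hden
  rw [hψ.deriv] at h1
  have hden4 : (0:ℝ) < (1 + 4 * a) ^ 2 := by positivity
  have h0' : 0 ≤ 16 * a ^ 2 - 24 * a + 5 := by
    have := h0
    simp only [ψ] at this
    rw [le_div_iff₀ (by positivity)] at this
    nlinarith [this]
  have h1' : 0 ≤ 12 * a - 3 := by
    rw [le_div_iff₀ (by positivity)] at h1
    nlinarith [h1, sq_nonneg (1 + 4 * a), hden4]
  nlinarith [h0', h1', h2, sq_nonneg (4 * a - 1)]
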